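/- Let D be an Eulerian digraph and let P₁,…,P_j be pairwise edge-disjoint directed paths from a vertex x to a vertex y. Then the digraph obtained from D by deleting the edges of P₁,…,P_j contains j pairwise edge-disjoint directed paths from y to x. -/

import Mathlib

/-- A multidigraph on vertex type `V` with edge type `E`. -/
structure MDG (V : Type) (E : Type) where
  tail : E → V
  head : E → V

namespace MDG

variable {V E : Type}

/-- A directed walk from `u` to `w`, given as the list of its edges. -/
inductive IsWalk (D : MDG V E) : V → V → List E → Prop
  | nil (v : V) : IsWalk D v v []
  | cons {u w : V} {e : E} {p : List E} :
      D.tail e = u → IsWalk D (D.head e) w p → IsWalk D u w (e :: p)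

/-- Out-degree of a vertex. -/
def outDeg (D : MDG V E) [Fintype E] [DecidableEq V] (v : V) : ℕ :=
  (Finset.univ.filter fun e => D.tail e = v).card

/-- In-degree of a vertex. -/
def inDeg (D : MDG V E) [Fintype E] [DecidableEq V] (v : V) : ℕ :=
  (Finset.univ.filter fun e => D.head e = v).card

/-- Eulerian: in-degree equals out-degree at every vertex. -/
def Eulerian (D : MDG V E) [Fintype E] [DecidableEq V] : Prop :=
  ∀ v, D.outDeg v = D.inDeg v

/-- Simple: no loops, and at most one edge per ordered pair of vertices. -/
def Simple (D : MDG V E) : Prop :=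
  (∀ e, D.tail e ≠ D.head e) ∧
  ∀ e e', D.tail e = D.tail e' → D.head e = D.head e' → e = e'

/-- `d⁺(X)`: number of edges from `X` to its complement. -/
def cutOut (D : MDG V E) [Fintype E] [DecidableEq V] (X : Finset V) : ℕ :=
  (Finset.univ.filter fun e => D.tail e ∈ X ∧ D.head e ∉ X).card

/-- `d⁻(X)`: number of edges from the complement of `X` into `X`. -/
def cutIn (D : MDG V E) [Fintype E] [DecidableEq V] (X : Finset V) : ℕ :=
  (Finset.univ.filter fun e => D.head e ∈ X ∧ D.tail e ∉ X).card

/-- `d(X) = d⁺(X) + d⁻(X)`. -/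
def cut (D : MDG V E) [Fintype E] [DecidableEq V] (X : Finset V) : ℕ :=
  D.cutOut X + D.cutIn X

/-- Adjacency: there is an edge from `a` to `b`. -/
def Adj (D : MDG V E) (a b : V) : Prop :=
  ∃ e, D.tail e = a ∧ D.head e = b

/-- Immersion of the complete digraph `K⃗_t`: an injection `φ : Fin t → V` together with
pairwise edge-disjoint directed trails, one from `φ i` to `φ j` for each ordered pair
`i ≠ j`. -/
def ImmerseK (D : MDG V E) (t : ℕ) : Prop :=
  ∃ φ : Fin t → V, Function.Injective φ ∧
    ∃ P : Fin t → Fin t → List E,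
      (∀ i j : Fin t, i ≠ j → D.IsWalk (φ i) (φ j) (P i j) ∧ (P i j).Nodup) ∧
      ∀ i j i' j' : Fin t, (i, j) ≠ (i', j') → ∀ e, e ∈ P i j → e ∉ P i' j'

/-- Immersion of a multidigraph `F` in `D`: an injection of the vertices together with
pairwise edge-disjoint directed trails realizing the edges of `F`. -/
def Immerse (D : MDG V E) {n m : ℕ} (F : MDG (Fin n) (Fin m)) : Prop :=
  ∃ φ : Fin n → V, Function.Injective φ ∧
    ∃ P : Fin m → List E,
      (∀ f, D.IsWalk (φ (F.tail f)) (φ (F.head f)) (P f) ∧ (P f).Nodup) ∧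
      ∀ f f', f ≠ f' → ∀ e, e ∈ P f → e ∉ P f'

set_option linter.unusedSectionVars false

section Aux
variable [DecidableEq V] [DecidableEq E] (D : MDG V E)

def outS (S : Finset E) (v : V) : ℕ := (S.filter fun e => D.tail e = v).card
def inS (S : Finset E) (v : V) : ℕ := (S.filter fun e => D.head e = v).card

lemma walk_count {u w : V} {p : List E} (h : D.IsWalk u w p) (v : V) :
    (p.filter fun e => D.tail e = v).length + (if v = w then 1 else 0)
      = (p.filter fun e => D.head e = v).length + (if v = u then 1 else 0) := by
  induction h with
  | nil z => rfl
  | @cons u w e p ht hw ih =>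
      subst ht
      have hf : ∀ g : E → V, ((e :: p).filter fun e' => g e' = v).length
          = (p.filter fun e' => g e' = v).length + (if g e = v then 1 else 0) := by
        intro g; by_cases h : g e = v <;> simp [List.filter_cons, h]
      rw [hf, hf]
      have h1 : (if v = D.tail e then (1:ℕ) else 0) = (if D.tail e = v then 1 else 0) := by
        simp [eq_comm]
      have h2 : (if v = D.head e then (1:ℕ) else 0) = (if D.head e = v then 1 else 0) := by
        simp [eq_comm]
      rw [h2] at ih
      rw [h1]
      omega

lemma filter_card_remove (S : Finset E) (p : List E) (nd : p.Nodup)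
    (sub : ∀ e ∈ p, e ∈ S) (q : E → Prop) [DecidablePred q] :
    ((S.filter fun e => e ∉ p).filter q).card + (p.filter fun e => q e).length
      = (S.filter q).card := by
  have h1 : (S.filter fun e => e ∉ p).filter q
      = (S.filter q) \ (p.filter fun e => q e).toFinset := by
    ext a; simp [List.mem_filter]; tauto
  have h2 : (p.filter fun e => q e).toFinset ⊆ S.filter q := by
    intro a ha
    simp [List.mem_filter] at ha
    simp [sub _ ha.1, ha.2]
  have h3 : (p.filter fun e => q e).toFinset.card = (p.filter fun e => q e).length :=
    List.toFinset_card_of_nodup (nd.filter _)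
  have h4 := Finset.card_sdiff_of_subset h2
  have h5 := Finset.card_le_card h2
  rw [h1, h4]
  omega


lemma filter_singleton_len (e : E) (q : E → Prop) [DecidablePred q] :
    (([e] : List E).filter fun e' => q e').length = if q e then 1 else 0 := by
  by_cases h : q e <;> simp [h]

lemma exists_trail_to (x : V) :
    ∀ n (S : Finset E), S.card ≤ n → (∀ v, v ≠ x → D.inS S v ≤ D.outS S v) →
    ∀ u, D.inS S u < D.outS S u →
    ∃ p : List E, D.IsWalk u x p ∧ p.Nodup ∧ ∀ e ∈ p, e ∈ S := by
  intro n
  induction n with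
  | zero =>
      intro S hc hS u hu
      have h1 : D.outS S u ≤ S.card := Finset.card_filter_le _ _
      omega
  | succ n ih =>
      intro S hc hS u hu
      have h0 : 0 < (S.filter fun e => D.tail e = u).card := by
        have : D.outS S u = (S.filter fun e => D.tail e = u).card := rfl
        omega
      obtain ⟨e, he⟩ := Finset.card_pos.mp h0
      obtain ⟨heS, het⟩ := Finset.mem_filter.mp he
      by_cases hex : D.head e = x
      · refine ⟨[e], IsWalk.cons het ?_, by simp, by simpa using heS⟩
        rw [hex]; exact IsWalk.nil x
      · set S' := S.filter fun e' => e' ∉ [e] with hS'def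
        have nd1 : ([e] : List E).Nodup := by simp
        have sub1 : ∀ e' ∈ [e], e' ∈ S := by simpa using heS
        have hin : ∀ v, D.inS S' v + (if D.head e = v then 1 else 0) = D.inS S v := by
          intro v
          have := filter_card_remove S [e] nd1 sub1 (fun e' => D.head e' = v)
          rwa [filter_singleton_len] at this
        have hout : ∀ v, D.outS S' v + (if D.tail e = v then 1 else 0) = D.outS S v := by
          intro v
          have := filter_card_remove S [e] nd1 sub1 (fun e' => D.tail e' = v)
          rwa [filter_singleton_len] at this
        have hcard : S'.card ≤ n := by
          have hlt : S'.card < S.card := by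
            refine Finset.card_lt_card ⟨Finset.filter_subset _ _, fun hsub => ?_⟩
            have := hsub heS
            rw [hS'def, Finset.mem_filter] at this
            simp at this
          omega
        have hS'h : ∀ v, v ≠ x → D.inS S' v ≤ D.outS S' v := by
          intro v hv
          have h1 := hin v; have h2 := hout v
          by_cases ht : D.tail e = v
          · have hvu : v = u := ht.symm.trans het
            subst hvu
            by_cases hh : D.head e = v <;> simp [ht, hh] at h1 h2 <;> omega
          · have := hS v hv
            by_cases hh : D.head e = v <;> simp [ht, hh] at h1 h2 <;> omega
        have hu' : D.inS S' (D.head e) < D.outS S' (D.head e) := by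
          have h1 := hin (D.head e); have h2 := hout (D.head e)
          have h3 := hS (D.head e) hex
          by_cases ht : D.tail e = D.head e
          · have hvu : D.head e = u := ht.symm ▸ het
            rw [hvu] at h1 h2 ⊢
            rw [hvu] at ht
            simp [ht] at h1 h2
            omega
          · simp [ht] at h1 h2
            omega
        obtain ⟨p', hp', hnd', hsub'⟩ := ih S' hcard hS'h (D.head e) hu'
        have hep' : e ∉ p' := by
          intro hmem
          have := hsub' e hmem
          rw [hS'def, Finset.mem_filter] at this
          simp at this
        refine ⟨e :: p', IsWalk.cons het hp', List.nodup_cons.mpr ⟨hep', hnd'⟩, ?_⟩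
        intro e' he'
        rcases List.mem_cons.mp he' with rfl | hm
        · exact heS
        · exact Finset.filter_subset _ _ (hsub' e' hm)

lemma extract_trails (x y : V) :
    ∀ k (S : Finset E), (∀ v, v ≠ x → D.inS S v ≤ D.outS S v) →
    D.inS S y + k ≤ D.outS S y →
    ∃ Q : Fin k → List E,
      (∀ i, D.IsWalk y x (Q i) ∧ (Q i).Nodup) ∧
      (∀ i i', i ≠ i' → ∀ e, e ∈ Q i → e ∉ Q i') ∧
      ∀ i, ∀ e ∈ Q i, e ∈ S := by
  intro k
  induction k with
  | zero =>
      intro S _ _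
      exact ⟨fun i => i.elim0, fun i => i.elim0, fun i => i.elim0, fun i => i.elim0⟩
  | succ k ih =>
      intro S hS hy
      obtain ⟨p, hp, hnd, hsub⟩ := D.exists_trail_to x S.card S le_rfl hS y (by omega)
      set S' := S.filter fun e => e ∉ p with hS'def
      have hin : ∀ v, D.inS S' v + (p.filter fun e => D.head e = v).length = D.inS S v :=
        fun v => filter_card_remove S p hnd hsub (fun e => D.head e = v)
      have hout : ∀ v, D.outS S' v + (p.filter fun e => D.tail e = v).length = D.outS S v :=
        fun v => filter_card_remove S p hnd hsub (fun e => D.tail e = v)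
      have hS' : ∀ v, v ≠ x → D.inS S' v ≤ D.outS S' v := by
        intro v hv
        have hwc := D.walk_count hp v
        have h1 := hin v; have h2 := hout v
        by_cases hvy : v = y
        · subst hvy
          simp [hv] at hwc
          omega
        · simp [hv, hvy] at hwc
          have := hS v hv
          omega
      have hy' : D.inS S' y + k ≤ D.outS S' y := by
        have hwc := D.walk_count hp y
        have h1 := hin y; have h2 := hout y
        by_cases hyx : y = x
        · subst hyx; simp at hwc; omega
        · simp [hyx] at hwc; omega
      obtain ⟨Q', hQ1, hQ2, hQ3⟩ := ih S' hS' hy'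
      have hnotp : ∀ (i : Fin k) (e : E), e ∈ Q' i → e ∉ p := by
        intro i e hei hep
        have := hQ3 i e hei
        rw [hS'def, Finset.mem_filter] at this
        exact this.2 hep
      refine ⟨Fin.cons p Q', ?_, ?_, ?_⟩
      · intro i
        rcases Fin.eq_zero_or_eq_succ i with rfl | ⟨a, rfl⟩
        · simpa using ⟨hp, hnd⟩
        · simpa using hQ1 a
      · intro i i' hne e hei hei'
        rcases Fin.eq_zero_or_eq_succ i with rfl | ⟨a, rfl⟩ <;>
          rcases Fin.eq_zero_or_eq_succ i' with rfl | ⟨b, rfl⟩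
        · exact hne rfl
        · simp only [Fin.cons_zero] at hei
          simp only [Fin.cons_succ] at hei'
          exact hnotp b e hei' hei
        · simp only [Fin.cons_succ] at hei
          simp only [Fin.cons_zero] at hei'
          exact hnotp a e hei hei'
        · simp only [Fin.cons_succ] at hei hei'
          have hab : a ≠ b := fun h => hne (by rw [h])
          exact hQ2 a b hab e hei hei'
      · intro i e hei
        rcases Fin.eq_zero_or_eq_succ i with rfl | ⟨a, rfl⟩
        · simp only [Fin.cons_zero] at hei
          exact hsub e hei
        · simp only [Fin.cons_succ] at hei
          exact Finset.filter_subset _ _ (hQ3 a e hei)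

lemma remove_trails (x y : V) (hxy : y ≠ x) :
    ∀ L : List (List E), ∀ (S : Finset E) (k : ℕ),
    (∀ p ∈ L, D.IsWalk x y p ∧ p.Nodup ∧ ∀ e ∈ p, e ∈ S) →
    L.Pairwise (fun p q => ∀ e ∈ p, e ∉ q) →
    (∀ v, v ≠ x → D.inS S v ≤ D.outS S v) →
    D.inS S y + k ≤ D.outS S y →
    (∀ v, v ≠ x → D.inS (S.filter fun e => ∀ p ∈ L, e ∉ p) v
        ≤ D.outS (S.filter fun e => ∀ p ∈ L, e ∉ p) v) ∧
    D.inS (S.filter fun e => ∀ p ∈ L, e ∉ p) y + (k + L.length)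
      ≤ D.outS (S.filter fun e => ∀ p ∈ L, e ∉ p) y := by
  intro L
  induction L with
  | nil =>
      intro S k _ _ hS hy
      have hfe : (S.filter fun e => ∀ p ∈ ([] : List (List E)), e ∉ p) = S := by
        ext a; simp
      rw [hfe]
      exact ⟨hS, by simpa using hy⟩
  | cons p L ih =>
      intro S k hL hpw hS hy
      obtain ⟨hpw1, hpw2⟩ := List.pairwise_cons.mp hpw
      obtain ⟨hp, hnd, hsub⟩ := hL p (by simp)
      set S' := S.filter fun e => e ∉ p with hS'def
      have hin : ∀ v, D.inS S' v + (p.filter fun e => D.head e = v).length = D.inS S v :=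
        fun v => filter_card_remove S p hnd hsub (fun e => D.head e = v)
      have hout : ∀ v, D.outS S' v + (p.filter fun e => D.tail e = v).length = D.outS S v :=
        fun v => filter_card_remove S p hnd hsub (fun e => D.tail e = v)
      have key1 : ∀ v, v ≠ x → D.inS S' v ≤ D.outS S' v := by
        intro v hv
        have hwc := D.walk_count hp v
        have h1 := hin v; have h2 := hout v
        by_cases hvy : v = y
        · subst hvy
          simp [hxy] at hwc
          have := hS v hv
          omega
        · simp [hv, hvy] at hwc
          have := hS v hv
          omega
      have key2 : D.inS S' y + (k + 1) ≤ D.outS S' y := by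
        have hwc := D.walk_count hp y
        have h1 := hin y; have h2 := hout y
        simp [hxy] at hwc
        omega
      have hfe : (S.filter fun e => ∀ q ∈ (p :: L), e ∉ q)
          = (S'.filter fun e => ∀ q ∈ L, e ∉ q) := by
        ext a
        simp only [hS'def, Finset.mem_filter, List.mem_cons]
        constructor
        · intro ⟨h1, h2⟩
          exact ⟨⟨h1, h2 p (Or.inl rfl)⟩, fun q hq => h2 q (Or.inr hq)⟩
        · intro ⟨⟨h1, h2⟩, h3⟩
          refine ⟨h1, fun q hq => ?_⟩
          rcases hq with rfl | hq
          · exact h2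
          · exact h3 q hq
      have hL' : ∀ q ∈ L, D.IsWalk x y q ∧ q.Nodup ∧ ∀ e ∈ q, e ∈ S' := by
        intro q hq
        obtain ⟨h1, h2, h3⟩ := hL q (by simp [hq])
        refine ⟨h1, h2, fun e heq => ?_⟩
        rw [hS'def, Finset.mem_filter]
        exact ⟨h3 e heq, fun hep => hpw1 q hq e hep heq⟩
      have := ih S' (k + 1) hL' hpw2 key1 key2
      rw [hfe]
      refine ⟨this.1, ?_⟩
      have h2 := this.2
      simp only [List.length_cons]
      omega

end Aux

end MDG

/-- Let `D` be Eulerian and let `P₁, …, P_j` be pairwise edge-disjoint directed trails from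
`x` to `y`.  Then after deleting their edges, `D` still contains `j` pairwise edge-disjoint
directed trails from `y` to `x`. -/
theorem eulerian_reverse_paths {V E : Type} [Fintype V] [Fintype E] [DecidableEq V]
    (D : MDG V E) (he : D.Eulerian) (x y : V) (j : ℕ) (P : Fin j → List E)
    (hP : ∀ i, D.IsWalk x y (P i) ∧ (P i).Nodup)
    (hdisj : ∀ i i', i ≠ i' → ∀ e, e ∈ P i → e ∉ P i') :
    ∃ Q : Fin j → List E,
      (∀ i, D.IsWalk y x (Q i) ∧ (Q i).Nodup) ∧
      (∀ i i', i ≠ i' → ∀ e, e ∈ Q i → e ∉ Q i') ∧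
      ∀ i, ∀ e ∈ Q i, ∀ i', e ∉ P i' := by
  classical
  by_cases hxy : y = x
  · subst hxy
    exact ⟨fun _ => [], fun i => ⟨MDG.IsWalk.nil y, List.nodup_nil⟩,
      fun i i' _ e h => absurd h List.not_mem_nil,
      fun i e h => absurd h List.not_mem_nil⟩
  · set L := List.ofFn P with hLdef
    have hL : ∀ p ∈ L, D.IsWalk x y p ∧ p.Nodup ∧ ∀ e ∈ p, e ∈ (Finset.univ : Finset E) := by
      intro p hp
      obtain ⟨i, hi⟩ := List.mem_ofFn.mp hp
      subst hi
      exact ⟨(hP i).1, (hP i).2, fun e _ => Finset.mem_univ e⟩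
    have hpw : L.Pairwise (fun p q => ∀ e ∈ p, e ∉ q) := by
      rw [hLdef, List.pairwise_ofFn]
      intro i j hij
      exact hdisj i j (ne_of_lt hij)
    have hS : ∀ v, v ≠ x → D.inS Finset.univ v ≤ D.outS Finset.univ v :=
      fun v _ => (he v).ge
    have h0 : D.inS Finset.univ y + 0 ≤ D.outS Finset.univ y := by
      exact (he y).ge
    obtain ⟨hA, hB⟩ := D.remove_trails x y hxy L Finset.univ 0 hL hpw hS h0
    have hBj : D.inS (Finset.univ.filter fun e => ∀ p ∈ L, e ∉ p) y + j
        ≤ D.outS (Finset.univ.filter fun e => ∀ p ∈ L, e ∉ p) y := by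
      simpa [hLdef, List.length_ofFn] using hB
    obtain ⟨Q, hQ1, hQ2, hQ3⟩ := D.extract_trails x y j _ hA hBj
    refine ⟨Q, hQ1, hQ2, ?_⟩
    intro i e hei i'
    have h := hQ3 i e hei
    rw [Finset.mem_filter] at h
    exact h.2 (P i') (List.mem_ofFn.mpr ⟨i', rfl⟩)
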